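/- For every d ∈ (0,1), every integer k ≥ 1 and all x₁,…,x_k ∈ (0,1], one has (1 + x₁^d + ⋯ + x_k^d)/(1 + x₁ + ⋯ + x_k)^d ≥ (1 + max{x₁,…,x_k})^{1−d}. -/
import Mathlib


/-- **(5.13), elementary inequality.** For `d ∈ (0,1)`, `k ≥ 1` and `x₁,…,x_k ∈ (0,1]`,
`(1 + x₁^d + ⋯ + x_k^d)/(1 + x₁ + ⋯ + x_k)^d ≥ (1 + max{x₁,…,x_k})^{1-d}`. -/
theorem one_add_sum_rpow_div_ge
    (d : ℝ) (hd : d ∈ Set.Ioo (0 : ℝ) 1)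
    (k : ℕ) (hk : 1 ≤ k)
    (x : Fin k → ℝ) (hx : ∀ i, x i ∈ Set.Ioc (0 : ℝ) 1) :
    (1 + sSup (Set.range x)) ^ (1 - d) ≤
      (1 + ∑ i, x i ^ d) / (1 + ∑ i, x i) ^ d := by
  obtain ⟨hd0, hd1⟩ := hd
  have hk' : Nonempty (Fin k) := ⟨⟨0, hk⟩⟩
  have hS : (0 : ℝ) < ∑ i, x i :=
    Finset.sum_pos (fun i _ => (hx i).1) Finset.univ_nonempty
  have hMS : sSup (Set.range x) ≤ ∑ i, x i := by
    apply csSup_le (Set.range_nonempty x)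
    rintro y ⟨j, rfl⟩
    exact Finset.single_le_sum (fun i _ => (hx i).1.le) (Finset.mem_univ j)
  have h1S : (0 : ℝ) < 1 + ∑ i, x i := by linarith
  have hsum : (1 + ∑ i, x i) ≤ 1 + ∑ i, x i ^ d := by
    gcongr with i
    calc x i = x i ^ (1 : ℝ) := (Real.rpow_one _).symm
    _ ≤ x i ^ d := Real.rpow_le_rpow_of_exponent_ge (hx i).1 (hx i).2 hd1.le
  calc (1 + sSup (Set.range x)) ^ (1 - d)
      ≤ (1 + ∑ i, x i) ^ (1 - d) := by
        have hM0 : (0:ℝ) ≤ sSup (Set.range x) :=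
          le_trans (hx ⟨0, hk⟩).1.le
            (le_csSup (Set.finite_range x).bddAbove ⟨⟨0, hk⟩, rfl⟩)
        apply Real.rpow_le_rpow (by linarith) (by linarith) (by linarith)
    _ = (1 + ∑ i, x i) ^ (1 : ℝ) / (1 + ∑ i, x i) ^ d := Real.rpow_sub h1S 1 d
    _ = (1 + ∑ i, x i) / (1 + ∑ i, x i) ^ d := by rw [Real.rpow_one]
    _ ≤ (1 + ∑ i, x i ^ d) / (1 + ∑ i, x i) ^ d := by gcongr
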